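/- arXiv:1908.02250 — 8 statements merged into one kernel-verified Lean document; each statement's English description precedes it below -/
import Mathlib

section
/- For every positive integer n with n < 2^k (k a positive integer), D(n + 2^k) = D(n) + (n+1)·(⌊log₂ n⌋ - k + 2) + 2^k - 2^(⌊log₂ n⌋ + 1). -/
/-- f m = (#1 digits) - (#0 digits) in the binary expansion of m. -/
def f (m : ℕ) : ℤ :=
  2 * ((Nat.digits 2 m).count 1 : ℤ) - ((Nat.digits 2 m).length : ℤ)

/-- Cumulated deficient binary digit sum (OEIS A268289), D 0 = 0. -/
def D (n : ℕ) : ℤ := ∑ m ∈ Finset.Icc 1 n, f m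

/-- Sum of binary lengths. -/
def L (n : ℕ) : ℤ := ∑ m ∈ Finset.Icc 1 n, ((Nat.digits 2 m).length : ℤ)

lemma f_zero : f 0 = 0 := by simp [f]

lemma len_le {j k : ℕ} (hj : j < 2 ^ k) : (Nat.digits 2 j).length ≤ k := by
  rcases Nat.eq_zero_or_pos j with rfl | hpos
  · simp
  · rw [Nat.digits_len 2 j one_lt_two hpos.ne']
    exact Nat.log_lt_of_lt_pow hpos.ne' hj

lemma f_shift {k j : ℕ} (hj : j < 2 ^ k) :
    f (2 ^ k + j) = f j + ((Nat.digits 2 j).length : ℤ) + 1 - k := by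
  have hlen := len_le hj
  have hd := Nat.digits_append_zeroes_append_digits
    (b := 2) (k := k - (Nat.digits 2 j).length) (m := 1) (n := j) one_lt_two one_pos
  rw [Nat.add_sub_cancel' hlen, mul_one] at hd
  have hdig : Nat.digits 2 (2 ^ k + j)
      = Nat.digits 2 j ++ List.replicate (k - (Nat.digits 2 j).length) 0 ++ Nat.digits 2 1 := by
    rw [hd, add_comm]
  unfold f
  rw [hdig]
  have h1 : Nat.digits 2 1 = [1] := by simp
  rw [h1]
  simp only [List.count_append, List.length_append, List.count_replicate,
    List.length_replicate]
  have : ((k - (Nat.digits 2 j).length : ℕ) : ℤ) = (k : ℤ) - (Nat.digits 2 j).length := by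
    omega
  push_cast
  simp only [this]
  norm_num
  ring

lemma D_split {n k : ℕ} (h : n < 2 ^ k) :
    D (n + 2 ^ k) = D (2 ^ k - 1) + ∑ j ∈ Finset.range (n + 1), f (2 ^ k + j) := by
  have h1 : 1 ≤ 2 ^ k := Nat.one_le_two_pow
  unfold D
  have e1 : Finset.Icc 1 (n + 2 ^ k) = Finset.Ico 1 (2 ^ k + n + 1) := by
    rw [Finset.Ico_add_one_right_eq_Icc]; congr 1; omega
  have e2 : Finset.Icc 1 (2 ^ k - 1) = Finset.Ico 1 (2 ^ k) := by
    rw [← Finset.Ico_add_one_right_eq_Icc]; congr 1; omega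
  have hc := Finset.sum_Ico_consecutive (f := f) (m := 1) (n := 2 ^ k) (k := 2 ^ k + n + 1)
    h1 (by omega)
  rw [e1, e2, ← hc]
  congr 1
  rw [Finset.sum_Ico_eq_sum_range]
  have : 2 ^ k + n + 1 - 2 ^ k = n + 1 := by omega
  rw [this]

lemma sum_shift {n k : ℕ} (h : n < 2 ^ k) :
    ∑ j ∈ Finset.range (n + 1), f (2 ^ k + j)
      = D n + L n + (n + 1) * (1 - (k : ℤ)) := by
  have step : ∀ j ∈ Finset.range (n + 1),
      f (2 ^ k + j) = f j + ((Nat.digits 2 j).length : ℤ) + (1 - (k : ℤ)) := by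
    intro j hj
    rw [Finset.mem_range] at hj
    have := f_shift (j := j) (k := k) (by omega)
    linarith
  rw [Finset.sum_congr rfl step, Finset.sum_add_distrib, Finset.sum_add_distrib,
    Finset.sum_const, Finset.card_range]
  have hD : ∑ j ∈ Finset.range (n + 1), f j = D n := by
    unfold D
    rw [Finset.range_eq_Ico, Finset.sum_eq_sum_Ico_succ_bot (by omega), f_zero, zero_add,
      Finset.Ico_add_one_right_eq_Icc]
  have hL : ∑ j ∈ Finset.range (n + 1), ((Nat.digits 2 j).length : ℤ) = L n := by
    unfold L
    rw [Finset.range_eq_Ico, Finset.sum_eq_sum_Ico_succ_bot (by omega), Finset.Ico_add_one_right_eq_Icc]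
    simp
  rw [hD, hL]
  push_cast
  ring

lemma log_succ (n : ℕ) (hn : 0 < n) :
    (n + 1 = 2 ^ (Nat.log 2 n + 1) ∧ Nat.log 2 (n + 1) = Nat.log 2 n + 1)
    ∨ (n + 1 < 2 ^ (Nat.log 2 n + 1) ∧ Nat.log 2 (n + 1) = Nat.log 2 n) := by
  have h1 : 2 ^ Nat.log 2 n ≤ n := Nat.pow_log_le_self 2 hn.ne'
  have h2 : n < 2 ^ (Nat.log 2 n + 1) := Nat.lt_pow_succ_log_self one_lt_two n
  rcases eq_or_lt_of_le (Nat.succ_le_of_lt h2) with he | hl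
  · left
    refine ⟨he, ?_⟩
    rw [show n + 1 = 2 ^ (Nat.log 2 n + 1) from he, Nat.log_pow one_lt_two]
  · right
    refine ⟨hl, ?_⟩
    exact Nat.log_eq_of_pow_le_of_lt_pow (by omega) hl

lemma L_formula (n : ℕ) (hn : 0 < n) :
    L n = (n + 1) * ((Nat.log 2 n : ℤ) + 1) - 2 ^ (Nat.log 2 n + 1) + 1 := by
  induction n, hn using Nat.le_induction with
  | base =>
    have h1 : Nat.digits 2 1 = [1] := by simp
    simp [L, h1]
  | succ n hn ih =>
    have ihe := ih
    have hstep : L (n + 1) = L n + ((Nat.digits 2 (n + 1)).length : ℤ) := by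
      unfold L
      rw [← Finset.Ico_add_one_right_eq_Icc, Finset.sum_Ico_succ_top (by omega), Finset.Ico_add_one_right_eq_Icc]
    have hlen : ((Nat.digits 2 (n + 1)).length : ℤ) = (Nat.log 2 (n + 1) : ℤ) + 1 := by
      rw [Nat.digits_len 2 (n + 1) one_lt_two (by omega)]
      push_cast; ring
    rcases log_succ n hn with ⟨he, hlog⟩ | ⟨_, hlog⟩
    · have hcast : ((n : ℤ) + 1) = 2 ^ (Nat.log 2 n + 1) := by
        exact_mod_cast congrArg (fun x : ℕ => (x : ℤ)) he
      rw [hstep, hlen, hlog, ihe]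
      push_cast
      rw [pow_succ (2 : ℤ) (Nat.log 2 n + 1)]
      linarith [hcast]
    · rw [hstep, hlen, hlog, ihe]
      push_cast
      ring

lemma D_pow (k : ℕ) : D (2 ^ k - 1) = 2 ^ k - 1 := by
  induction k with
  | zero => simp [D]
  | succ k ih =>
    have h1 : 1 ≤ 2 ^ k := Nat.one_le_two_pow
    have hsplit := D_split (n := 2 ^ k - 1) (k := k) (by omega)
    have he : 2 ^ k - 1 + 2 ^ k = 2 ^ (k + 1) - 1 := by
      rw [pow_succ]; omega
    rw [he] at hsplit
    rw [hsplit, sum_shift (by omega), ih]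
    rcases Nat.eq_zero_or_pos k with rfl | hk
    · norm_num [L, D]
    · have hlog : Nat.log 2 (2 ^ k - 1) = k - 1 := by
        apply Nat.log_eq_of_pow_le_of_lt_pow
        · have : 2 ^ (k - 1) * 2 = 2 ^ k := by
            rw [← pow_succ]; congr 1; omega
          omega
        · have : k - 1 + 1 = k := by omega
          rw [this]; omega
      have hgt : 1 < 2 ^ k := Nat.one_lt_two_pow_iff.mpr hk.ne'
      have hL := L_formula (2 ^ k - 1) (by omega)
      rw [hlog] at hL
      have hk1 : k - 1 + 1 = k := by omega
      rw [hk1] at hL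
      rw [hL]
      have hc : ((2 ^ k - 1 : ℕ) : ℤ) = 2 ^ k - 1 := by
        push_cast [h1]; ring
      have hc2 : ((k - 1 : ℕ) : ℤ) = (k : ℤ) - 1 := by
        rw [Nat.cast_sub hk]; norm_num
      rw [hc, hc2]
      push_cast
      rw [pow_succ]
      ring

theorem stmt_0 (n k : ℕ) (hn : 0 < n) (hk : 0 < k) (h : n < 2 ^ k) :
    D (n + 2 ^ k) =
      D n + (n + 1) * ((Nat.log 2 n : ℤ) - k + 2) + 2 ^ k - 2 ^ (Nat.log 2 n + 1) := by
  rw [D_split h, sum_shift h, D_pow k, L_formula n hn]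
  push_cast
  ring
end

section
/- For every positive integer k, D(2^k - 1) = 2^k - 1. -/
namespace AuxD

def s (m : ℕ) : ℕ := (Nat.digits 2 m).count 1

lemma s_div2 (j : ℕ) : s j = s (j / 2) + j % 2 := by
  rcases Nat.eq_zero_or_pos j with h | h
  · simp [h, s]
  · have hd := Nat.digits_def' (by norm_num : 1 < 2) h
    unfold s
    rw [hd, List.count_cons]
    rcases Nat.mod_two_eq_zero_or_one j with h2 | h2 <;> simp [h2]

lemma lencount (k : ℕ) : ∀ j < 2 ^ k,
    (Nat.digits 2 (2 ^ k + j)).length = k + 1 ∧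
    (Nat.digits 2 (2 ^ k + j)).count 1 = s j + 1 := by
  induction k with
  | zero =>
    intro j hj
    interval_cases j
    simp [s]
  | succ k ih =>
    intro j hj
    have hpos : 0 < 2 ^ (k + 1) + j := by positivity
    have hp : (2:ℕ) ^ (k + 1) = 2 * 2 ^ k := by ring
    have hdiv : (2 ^ (k + 1) + j) / 2 = 2 ^ k + j / 2 := by omega
    have hmod : (2 ^ (k + 1) + j) % 2 = j % 2 := by omega
    have hj2 : j / 2 < 2 ^ k := by omega
    obtain ⟨hl, hc⟩ := ih (j / 2) hj2
    rw [Nat.digits_def' (by norm_num : 1 < 2) hpos, hdiv, hmod]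
    constructor
    · rw [List.length_cons, hl]
    · rw [List.count_cons, hc, s_div2 j]
      rcases Nat.mod_two_eq_zero_or_one j with h2 | h2 <;> simp [h2]

lemma sum_split {M : Type*} [AddCommMonoid M] (g : ℕ → M) (n : ℕ) :
    ∑ j ∈ Finset.range (2 * n), g j =
      ∑ j ∈ Finset.range n, (g (2 * j) + g (2 * j + 1)) := by
  induction n with
  | zero => simp
  | succ n ih =>
    have : 2 * (n + 1) = (2 * n + 1) + 1 := by ring
    rw [this, Finset.sum_range_succ, Finset.sum_range_succ, ih, Finset.sum_range_succ]
    rw [add_assoc]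

lemma s_two_mul (j : ℕ) : s (2 * j) = s j := by
  have h := s_div2 (2 * j)
  have h2 : 2 * j / 2 = j := by omega
  rw [h2] at h
  omega

lemma s_two_mul_add_one (j : ℕ) : s (2 * j + 1) = s j + 1 := by
  have h := s_div2 (2 * j + 1)
  have h2 : (2 * j + 1) / 2 = j := by omega
  rw [h2] at h
  omega

lemma sum_s (k : ℕ) : 2 * ∑ j ∈ Finset.range (2 ^ k), s j = k * 2 ^ k := by
  induction k with
  | zero => simp [s]
  | succ k ih =>
    have hp : (2:ℕ) ^ (k + 1) = 2 * 2 ^ k := by ring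
    rw [hp, sum_split]
    have : ∑ j ∈ Finset.range (2 ^ k), (s (2 * j) + s (2 * j + 1)) =
        ∑ j ∈ Finset.range (2 ^ k), (2 * s j + 1) := by
      apply Finset.sum_congr rfl
      intro j _
      rw [s_two_mul, s_two_mul_add_one]
      ring
    rw [this, Finset.sum_add_distrib, Finset.sum_const, Finset.card_range,
      ← Finset.mul_sum]
    have h2 : 2 * ∑ j ∈ Finset.range (2 ^ k), s j = k * 2 ^ k := ih
    ring_nf
    omega

lemma f_shift (k : ℕ) (j : ℕ) (hj : j < 2 ^ k) :
    f (2 ^ k + j) = 2 * (s j : ℤ) + 2 - (k + 1) := by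
  obtain ⟨hl, hc⟩ := lencount k j hj
  unfold f
  rw [hl, hc]
  push_cast
  ring

lemma G_eq (k : ℕ) : ∑ m ∈ Finset.range (2 ^ k), f m = 2 ^ k - 1 := by
  induction k with
  | zero => simp [f]
  | succ k ih =>
    have hp : (2:ℕ) ^ (k + 1) = 2 ^ k + 2 ^ k := by ring
    rw [hp, Finset.sum_range_add, ih]
    have hshift : ∑ j ∈ Finset.range (2 ^ k), f (2 ^ k + j) = 2 ^ k := by
      have : ∑ j ∈ Finset.range (2 ^ k), f (2 ^ k + j) =
          ∑ j ∈ Finset.range (2 ^ k), (2 * (s j : ℤ) + 2 - (k + 1)) := by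
        apply Finset.sum_congr rfl
        intro j hj
        exact f_shift k j (Finset.mem_range.mp hj)
      rw [this]
      have hs : (2 : ℤ) * ∑ j ∈ Finset.range (2 ^ k), (s j : ℤ) = k * 2 ^ k := by
        have h := sum_s k
        have h2 := congrArg (fun n : ℕ => (n : ℤ)) h
        push_cast at h2
        linarith
      simp only [sub_eq_add_neg, Finset.sum_add_distrib, Finset.sum_const,
        Finset.card_range, ← Finset.mul_sum]
      rw [hs]
      push_cast
      ring
    rw [hshift]
    push_cast
    ring

end AuxD

theorem stmt_1 (k : ℕ) (hk : 0 < k) : D (2 ^ k - 1) = 2 ^ k - 1 := by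
  have h1 : 1 ≤ 2 ^ k := Nat.one_le_two_pow
  have hD : D (2 ^ k - 1) = ∑ m ∈ Finset.range (2 ^ k), f m := by
    unfold D
    have : Finset.Icc 1 (2 ^ k - 1) = Finset.Ico 1 (2 ^ k) := by
      rw [Nat.Icc_eq_range', Nat.Ico_eq_range']
      congr 1
    rw [this]
    have hf0 : f 0 = 0 := by simp [f]
    have hins : Finset.range (2 ^ k) = insert 0 (Finset.Ico 1 (2 ^ k)) := by
      ext x
      simp only [Finset.mem_range, Finset.mem_insert, Finset.mem_Ico]
      omega
    rw [hins, Finset.sum_insert (by simp), hf0, zero_add]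
  rw [hD, AuxD.G_eq]
end

section
/- For every positive integer k, D(2^k) = 2^k - k. -/
lemma count1_step (r : ℕ) :
    (Nat.digits 2 r).count 1 = (if r % 2 = 1 then 1 else 0) + (Nat.digits 2 (r / 2)).count 1 := by
  rcases Nat.eq_zero_or_pos r with h | h
  · subst h; simp
  · rw [Nat.digits_def' (by norm_num) h, List.count_cons]
    rcases Nat.mod_two_eq_zero_or_one r with h2 | h2 <;> simp [h2] <;> omega

lemma count1_pow_add (k : ℕ) : ∀ r < 2 ^ k,
    (Nat.digits 2 (2 ^ k + r)).count 1 = (Nat.digits 2 r).count 1 + 1 := by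
  induction k with
  | zero =>
    intro r hr
    interval_cases r
    simp
  | succ k ih =>
    intro r hr
    have hpos : 0 < 2 ^ (k + 1) + r := by positivity
    rw [Nat.digits_def' (by norm_num) hpos, List.count_cons]
    have h1 : (2 ^ (k + 1) + r) % 2 = r % 2 := by
      rw [pow_succ]; omega
    have h2 : (2 ^ (k + 1) + r) / 2 = 2 ^ k + r / 2 := by
      rw [pow_succ] at hr ⊢; omega
    have h3 : r / 2 < 2 ^ k := by
      rw [pow_succ] at hr; omega
    rw [h1, h2, ih _ h3, count1_step r]
    rcases Nat.mod_two_eq_zero_or_one r with h4 | h4 <;> simp [h4] <;> omega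

lemma len_pow_add (k : ℕ) (r : ℕ) (hr : r < 2 ^ k) :
    (Nat.digits 2 (2 ^ k + r)).length = k + 1 := by
  rw [Nat.digits_len 2 _ (by norm_num) (by positivity)]
  congr 1
  apply Nat.log_eq_of_pow_le_of_lt_pow
  · omega
  · rw [pow_succ]; omega

lemma len_sum (k : ℕ) :
    ∑ r ∈ Finset.range (2 ^ k), ((Nat.digits 2 r).length : ℤ) = ((k : ℤ) - 1) * 2 ^ k + 1 := by
  induction k with
  | zero => simp
  | succ k ih =>
    have hsplit : Finset.range (2 ^ (k + 1)) =
        Finset.range (2 ^ k) ∪ Finset.Ico (2 ^ k) (2 ^ (k + 1)) := by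
      rw [Finset.range_eq_Ico, Finset.range_eq_Ico]
      exact (Finset.Ico_union_Ico_eq_Ico (Nat.zero_le _) (Nat.pow_le_pow_right (by norm_num : 0 < 2) (by omega : k ≤ k + 1))).symm
    rw [hsplit, Finset.sum_union (by
      rw [Finset.range_eq_Ico]
      exact Finset.Ico_disjoint_Ico_consecutive 0 (2 ^ k) (2 ^ (k + 1)))]
    rw [Finset.sum_Ico_eq_sum_range]
    have h2 : 2 ^ (k + 1) - 2 ^ k = 2 ^ k := by rw [pow_succ]; omega
    rw [h2, ih]
    have : ∀ i ∈ Finset.range (2 ^ k),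
        ((Nat.digits 2 (2 ^ k + i)).length : ℤ) = (k : ℤ) + 1 := by
      intro i hi
      rw [len_pow_add k i (Finset.mem_range.mp hi)]
      push_cast; ring
    rw [Finset.sum_congr rfl this, Finset.sum_const, Finset.card_range]
    push_cast
    ring

lemma f_sum (k : ℕ) : ∑ m ∈ Finset.range (2 ^ k), f m = 2 ^ k - 1 := by
  induction k with
  | zero => simp [f]
  | succ k ih =>
    have hsplit : Finset.range (2 ^ (k + 1)) =
        Finset.range (2 ^ k) ∪ Finset.Ico (2 ^ k) (2 ^ (k + 1)) := by
      rw [Finset.range_eq_Ico, Finset.range_eq_Ico]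
      exact (Finset.Ico_union_Ico_eq_Ico (Nat.zero_le _) (Nat.pow_le_pow_right (by norm_num : 0 < 2) (by omega : k ≤ k + 1))).symm
    rw [hsplit, Finset.sum_union (by
      rw [Finset.range_eq_Ico]
      exact Finset.Ico_disjoint_Ico_consecutive 0 (2 ^ k) (2 ^ (k + 1)))]
    rw [Finset.sum_Ico_eq_sum_range]
    have h2 : 2 ^ (k + 1) - 2 ^ k = 2 ^ k := by rw [pow_succ]; omega
    rw [h2]
    have hstep : ∀ i ∈ Finset.range (2 ^ k),
        f (2 ^ k + i) = f i + ((Nat.digits 2 i).length : ℤ) + 1 - k := by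
      intro i hi
      have hi' := Finset.mem_range.mp hi
      unfold f
      rw [count1_pow_add k i hi', len_pow_add k i hi']
      push_cast; ring
    rw [Finset.sum_congr rfl hstep]
    rw [Finset.sum_sub_distrib, Finset.sum_add_distrib, Finset.sum_add_distrib]
    rw [ih, len_sum k, Finset.sum_const, Finset.sum_const, Finset.card_range]
    push_cast
    ring

theorem stmt_2 (k : ℕ) (hk : 0 < k) : D (2 ^ k) = 2 ^ k - k := by
  have h0 : D (2 ^ k) = ∑ m ∈ Finset.range (2 ^ k), f m + f (2 ^ k) := by
    unfold D
    rw [← Finset.Ico_add_one_right_eq_Icc]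
    have h1 : ∑ m ∈ Finset.range (2 ^ k), f m = ∑ m ∈ Finset.Ico 1 (2 ^ k), f m := by
      rw [Finset.range_eq_Ico,
        Finset.sum_eq_sum_Ico_succ_bot (by positivity : 0 < 2 ^ k)]
      simp [f]
    rw [h1, Finset.sum_Ico_succ_top Nat.one_le_two_pow]
  have hf : f (2 ^ k) = 1 - k := by
    unfold f
    have := count1_pow_add k 0 (by positivity)
    have hl := len_pow_add k 0 (by positivity)
    simp only [Nat.add_zero] at this hl
    rw [this, hl]
    simp
    push_cast
    ring
  rw [h0, f_sum k, hf]
  ring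
end

section
/- For every nonnegative integer n, D(n) equals the cardinality of the set S_n = { m : 1 ≤ m ≤ n and ((n - m) mod 2^(⌊log₂ m⌋ + 1)) < 2^(⌊log₂ m⌋) }. -/
/-- The set S n from the paper (S 0 = ∅). -/
def S (n : ℕ) : Finset ℕ :=
  (Finset.Icc 1 n).filter
    (fun m => (n - m) % 2 ^ (Nat.log 2 m + 1) < 2 ^ (Nat.log 2 m))

lemma bitmod (n k : ℕ) : n / 2 ^ k % 2 = 1 ↔ 2 ^ k ≤ n % 2 ^ (k + 1) := by
  have h1 : n % 2 ^ (k + 1) / 2 ^ k = n / 2 ^ k % 2 := by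
    rw [pow_succ]; exact Nat.mod_mul_right_div_self n (2 ^ k) 2
  have hp : 0 < 2 ^ k := pow_pos (by norm_num) _
  have h2 : n % 2 ^ (k + 1) < 2 * 2 ^ k := by
    rw [← pow_succ']; exact Nat.mod_lt _ (by positivity)
  rw [← h1]
  constructor
  · intro h
    have := (Nat.le_div_iff_mul_le hp).mp (by omega : 1 ≤ n % 2 ^ (k + 1) / 2 ^ k)
    omega
  · intro h
    have hle : 1 ≤ n % 2 ^ (k + 1) / 2 ^ k := (Nat.le_div_iff_mul_le hp).mpr (by omega)
    have hlt : n % 2 ^ (k + 1) / 2 ^ k < 2 := (Nat.div_lt_iff_lt_mul hp).mpr (by omega)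
    omega

lemma count_one (n : ℕ) (hn : n ≠ 0) :
    (Nat.digits 2 n).count 1 =
      ((Finset.range (Nat.log 2 n + 1)).filter (fun k => n / 2 ^ k % 2 = 1)).card := by
  induction n using Nat.strong_induction_on with
  | _ n ih =>
    rcases Nat.lt_or_ge n 2 with h2 | h2
    · interval_cases n
      · omega
      · norm_num [Nat.digits_def' (one_lt_two) (by norm_num : (0:ℕ) < 1),
          Finset.filter_singleton]
    · have hd : Nat.digits 2 n = n % 2 :: Nat.digits 2 (n / 2) :=
        Nat.digits_def' one_lt_two (by omega)
      have hlog : Nat.log 2 n = Nat.log 2 (n / 2) + 1 := by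
        have h1 : 1 ≤ Nat.log 2 n := by
          rw [Nat.le_log_iff_pow_le one_lt_two hn]; simpa using h2
        have := Nat.log_div_base 2 n
        omega
      have ihh := ih (n / 2) (by omega) (by omega)
      have hshift : ∀ k : ℕ, n / 2 / 2 ^ k = n / 2 ^ (k + 1) := fun k => by
        rw [Nat.div_div_eq_div_mul, ← pow_succ']
      have hR : ((Finset.range (Nat.log 2 n + 1)).filter (fun k => n / 2 ^ k % 2 = 1)).card
          = ((Finset.range (Nat.log 2 (n / 2) + 1)).filter
              (fun k => n / 2 / 2 ^ k % 2 = 1)).card + if n % 2 = 1 then 1 else 0 := by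
        rw [hlog, Finset.card_filter, Finset.card_filter, Finset.sum_range_succ']
        congr 1
        · apply Finset.sum_congr rfl
          intro k _
          rw [← hshift k]
        · simp only [pow_zero, Nat.div_one]
      rw [hd, List.count_cons, ihh, hR]
      simp [beq_iff_eq]

lemma cardG (n : ℕ) (hn : 1 ≤ n) :
    ((Finset.Icc 1 (n - 1)).filter
      (fun m => (n - m) % 2 ^ (Nat.log 2 m + 1) = 0)).card
    = ((Finset.range (Nat.log 2 n)).filter (fun k => n / 2 ^ k % 2 = 1)).card := by
  -- key: members of LHS are exactly m = n % 2^(k+1) for k a 1-bit of n below the top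
  have key : ∀ m ∈ (Finset.Icc 1 (n - 1)).filter
      (fun m => (n - m) % 2 ^ (Nat.log 2 m + 1) = 0),
      m = n % 2 ^ (Nat.log 2 m + 1) ∧ Nat.log 2 m ∈ (Finset.range (Nat.log 2 n)).filter
        (fun k => n / 2 ^ k % 2 = 1) := by
    intro m hm
    rw [Finset.mem_filter, Finset.mem_Icc] at hm
    obtain ⟨⟨hm1, hm2⟩, hdvd⟩ := hm
    set k := Nat.log 2 m with hk
    have hml : 2 ^ k ≤ m := Nat.pow_log_le_self 2 (by omega)
    have hmu : m < 2 ^ (k + 1) := Nat.lt_pow_succ_log_self one_lt_two m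
    have hNpos : 1 ≤ n - m := by omega
    have hNd : 2 ^ (k + 1) ∣ (n - m) := Nat.dvd_of_mod_eq_zero hdvd
    have hNbig : 2 ^ (k + 1) ≤ n - m := Nat.le_of_dvd (by omega) hNd
    have hmod : n % 2 ^ (k + 1) = m := by
      obtain ⟨t, ht⟩ := hNd
      have hn' : n = m + 2 ^ (k + 1) * t := by omega
      rw [hn', Nat.add_mul_mod_self_left, Nat.mod_eq_of_lt hmu]
    refine ⟨hmod.symm, ?_⟩
    rw [Finset.mem_filter, Finset.mem_range]
    constructor
    · have : 2 ^ (k + 1) ≤ n := by omega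
      have := (Nat.le_log_iff_pow_le one_lt_two (by omega)).mpr this
      omega
    · rw [bitmod, hmod]; omega
  apply Finset.card_bij (fun m _ => Nat.log 2 m)
  · intro m hm; exact (key m hm).2
  · intro m1 h1 m2 h2 he
    have e1 := (key m1 h1).1
    have e2 := (key m2 h2).1
    rw [e1, e2, he]
  · -- surjective
    intro k hk
    rw [Finset.mem_filter, Finset.mem_range, bitmod] at hk
    obtain ⟨hklt, hbit⟩ := hk
    set m := n % 2 ^ (k + 1) with hm
    have hmu : m < 2 ^ (k + 1) := Nat.mod_lt _ (by positivity)
    have hpow : 2 ^ (k + 1) ≤ n := by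
      calc 2 ^ (k + 1) ≤ 2 ^ Nat.log 2 n := Nat.pow_le_pow_right (by norm_num) (by omega)
        _ ≤ n := Nat.pow_log_le_self 2 (by omega)
    have hlogm : Nat.log 2 m = k :=
      Nat.log_eq_of_pow_le_of_lt_pow hbit hmu
    refine ⟨m, ?_, hlogm⟩
    rw [Finset.mem_filter, Finset.mem_Icc, hlogm]
    have hp : 0 < 2 ^ k := pow_pos (by norm_num) _
    refine ⟨⟨by omega, by omega⟩, ?_⟩
    have : n - m = 2 ^ (k + 1) * (n / 2 ^ (k + 1)) := by
      have := Nat.mod_add_div n (2 ^ (k + 1))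
      omega
    rw [this, Nat.mul_mod_right]

lemma cardL (n : ℕ) (hn : 1 ≤ n) :
    ((Finset.Icc 1 (n - 1)).filter
      (fun m => (n - m) % 2 ^ (Nat.log 2 m + 1) = 2 ^ (Nat.log 2 m))).card
    = ((Finset.range (Nat.log 2 n)).filter (fun k => ¬ n / 2 ^ k % 2 = 1)).card := by
  have key : ∀ m ∈ (Finset.Icc 1 (n - 1)).filter
      (fun m => (n - m) % 2 ^ (Nat.log 2 m + 1) = 2 ^ (Nat.log 2 m)),
      m = n % 2 ^ (Nat.log 2 m + 1) + 2 ^ (Nat.log 2 m) ∧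
        Nat.log 2 m ∈ (Finset.range (Nat.log 2 n)).filter
          (fun k => ¬ n / 2 ^ k % 2 = 1) := by
    intro m hm
    rw [Finset.mem_filter, Finset.mem_Icc] at hm
    obtain ⟨⟨hm1, hm2⟩, hmod⟩ := hm
    set k := Nat.log 2 m with hk
    have hml : 2 ^ k ≤ m := Nat.pow_log_le_self 2 (by omega)
    have hmu : m < 2 ^ (k + 1) := Nat.lt_pow_succ_log_self one_lt_two m
    have hq : 2 ^ (k + 1) = 2 * 2 ^ k := by rw [pow_succ']
    -- n - m = 2^(k+1) t + 2^k
    have hdm := Nat.div_add_mod (n - m) (2 ^ (k + 1))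
    set t := (n - m) / 2 ^ (k + 1) with ht
    have hn' : n = 2 ^ (k + 1) * t + 2 ^ k + m := by omega
    have hmodn : n % 2 ^ (k + 1) = m - 2 ^ k := by
      have : n = 2 ^ (k + 1) * (t + 1) + (m - 2 ^ k) := by
        have : 2 ^ (k + 1) * (t + 1) = 2 ^ (k + 1) * t + 2 ^ (k + 1) := by ring
        omega
      rw [this, Nat.mul_add_mod, Nat.mod_eq_of_lt (by omega)]
    refine ⟨by omega, ?_⟩
    rw [Finset.mem_filter, Finset.mem_range, bitmod]
    constructor
    · have h2n : 2 ^ (k + 1) ≤ n := by omega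
      have := (Nat.le_log_iff_pow_le one_lt_two (by omega)).mpr h2n
      omega
    · omega
  apply Finset.card_bij (fun m _ => Nat.log 2 m)
  · intro m hm; exact (key m hm).2
  · intro m1 h1 m2 h2 he
    have e1 := (key m1 h1).1
    have e2 := (key m2 h2).1
    rw [e1, e2, he]
  · intro k hk
    rw [Finset.mem_filter, Finset.mem_range, bitmod] at hk
    obtain ⟨hklt, hbit⟩ := hk
    push_neg at hbit
    set m := n % 2 ^ (k + 1) + 2 ^ k with hm
    have hp : 0 < 2 ^ k := pow_pos (by norm_num) _
    have hq : 2 ^ (k + 1) = 2 * 2 ^ k := by rw [pow_succ']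
    have hru : n % 2 ^ (k + 1) < 2 ^ k := by omega
    have hmu : m < 2 ^ (k + 1) := by omega
    have hpow : 2 ^ (k + 1) ≤ n := by
      calc 2 ^ (k + 1) ≤ 2 ^ Nat.log 2 n := Nat.pow_le_pow_right (by norm_num) (by omega)
        _ ≤ n := Nat.pow_log_le_self 2 (by omega)
    have hlogm : Nat.log 2 m = k :=
      Nat.log_eq_of_pow_le_of_lt_pow (by omega) hmu
    refine ⟨m, ?_, hlogm⟩
    rw [Finset.mem_filter, Finset.mem_Icc, hlogm]
    refine ⟨⟨by omega, by omega⟩, ?_⟩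
    have hdm := Nat.mod_add_div n (2 ^ (k + 1))
    set s := n / 2 ^ (k + 1) with hs
    have hs1 : 1 ≤ s := by
      rcases Nat.eq_zero_or_pos s with h | h
      · rw [h, Nat.mul_zero] at hdm; omega
      · exact h
    obtain ⟨s', hs'⟩ : ∃ s', s = s' + 1 := ⟨s - 1, by omega⟩
    have hmul : 2 ^ (k + 1) * s = 2 ^ (k + 1) * s' + 2 ^ (k + 1) := by rw [hs']; ring
    have hnm : n - m = 2 ^ (k + 1) * s' + 2 ^ k := by omega
    rw [hnm, Nat.mul_add_mod, Nat.mod_eq_of_lt (by omega)]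



lemma step (n : ℕ) (hn : 1 ≤ n) : ((S n).card : ℤ) = ((S (n - 1)).card : ℤ) + f n := by
  set L := Nat.log 2 n with hLdef
  set T := Finset.Icc 1 (n - 1) with hT
  have hIcc : Finset.Icc 1 n = insert n T := by
    rw [hT]; ext x; simp only [Finset.mem_Icc, Finset.mem_insert]; omega
  have hnT : n ∉ T := by rw [hT]; simp only [Finset.mem_Icc]; omega
  have hPn : (n - n) % 2 ^ (Nat.log 2 n + 1) < 2 ^ (Nat.log 2 n) := by
    simp only [Nat.sub_self, Nat.zero_mod]
    positivity
  have hSn : (S n).card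
      = (T.filter (fun m => (n - m) % 2 ^ (Nat.log 2 m + 1) < 2 ^ (Nat.log 2 m))).card + 1 := by
    rw [S, hIcc, Finset.filter_insert, if_pos hPn,
      Finset.card_insert_of_notMem (fun h => hnT (Finset.mem_filter.mp h).1)]
  have hSn1 : (S (n - 1)).card
      = (T.filter (fun m => (n - 1 - m) % 2 ^ (Nat.log 2 m + 1) < 2 ^ (Nat.log 2 m))).card := by
    rw [S, hT]
  have split1 : (T.filter (fun m => (n - m) % 2 ^ (Nat.log 2 m + 1) < 2 ^ (Nat.log 2 m))).card
      = (T.filter (fun m => (n - m) % 2 ^ (Nat.log 2 m + 1) = 0)).card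
      + (T.filter (fun m => 1 ≤ (n - m) % 2 ^ (Nat.log 2 m + 1) ∧
          (n - m) % 2 ^ (Nat.log 2 m + 1) < 2 ^ (Nat.log 2 m))).card := by
    rw [← Finset.card_union_of_disjoint (by
      rw [Finset.disjoint_left]
      intro a ha hb
      rw [Finset.mem_filter] at ha hb
      omega), ← Finset.filter_or]
    apply congrArg
    apply Finset.filter_congr
    intro m _
    have hp : 0 < (2:ℕ) ^ (Nat.log 2 m) := pow_pos (by norm_num) _
    constructor
    · intro h; omega
    · intro h; omega
  have key2 : ∀ m ∈ T, ((n - 1 - m) % 2 ^ (Nat.log 2 m + 1) < 2 ^ (Nat.log 2 m)) ↔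
      ((n - m) % 2 ^ (Nat.log 2 m + 1) = 2 ^ (Nat.log 2 m) ∨
       (1 ≤ (n - m) % 2 ^ (Nat.log 2 m + 1) ∧
        (n - m) % 2 ^ (Nat.log 2 m + 1) < 2 ^ (Nat.log 2 m))) := by
    intro m hm
    rw [hT, Finset.mem_Icc] at hm
    set k := Nat.log 2 m with hk
    have hq : (2:ℕ) ^ (k + 1) = 2 * 2 ^ k := by rw [pow_succ']
    have hp : 0 < (2:ℕ) ^ k := pow_pos (by norm_num) _
    have hN : 1 ≤ n - m := by omega
    have hdm := Nat.div_add_mod (n - m) (2 ^ (k + 1))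
    set r := (n - m) % 2 ^ (k + 1) with hr
    set t := (n - m) / 2 ^ (k + 1) with ht
    have hrlt : r < 2 ^ (k + 1) := by rw [hr]; exact Nat.mod_lt _ (by positivity)
    by_cases h0 : r = 0
    · have ht1 : 1 ≤ t := by
        rcases Nat.eq_zero_or_pos t with h | h
        · exfalso; rw [h, Nat.mul_zero] at hdm; omega
        · exact h
      obtain ⟨t', htt⟩ : ∃ t', t = t' + 1 := ⟨t - 1, by omega⟩
      have hmul : 2 ^ (k + 1) * t = 2 ^ (k + 1) * t' + 2 ^ (k + 1) := by rw [htt]; ring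
      have hx : n - 1 - m = 2 ^ (k + 1) * t' + (2 ^ (k + 1) - 1) := by omega
      rw [hx, Nat.mul_add_mod, Nat.mod_eq_of_lt (by omega)]
      omega
    · have hx : n - 1 - m = 2 ^ (k + 1) * t + (r - 1) := by omega
      rw [hx, Nat.mul_add_mod, Nat.mod_eq_of_lt (by omega)]
      omega
  have split2 : (T.filter (fun m => (n - 1 - m) % 2 ^ (Nat.log 2 m + 1) < 2 ^ (Nat.log 2 m))).card
      = (T.filter (fun m => (n - m) % 2 ^ (Nat.log 2 m + 1) = 2 ^ (Nat.log 2 m))).card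
      + (T.filter (fun m => 1 ≤ (n - m) % 2 ^ (Nat.log 2 m + 1) ∧
          (n - m) % 2 ^ (Nat.log 2 m + 1) < 2 ^ (Nat.log 2 m))).card := by
    rw [Finset.filter_congr key2, Finset.filter_or,
      Finset.card_union_of_disjoint (by
        rw [Finset.disjoint_left]
        intro a ha hb
        rw [Finset.mem_filter] at ha hb
        omega)]
  have hG := cardG n hn
  have hLc := cardL n hn
  have hbits := Finset.card_filter_add_card_filter_not
    (s := Finset.range L) (p := fun k => n / 2 ^ k % 2 = 1)
  rw [Finset.card_range] at hbits
  have htop : n / 2 ^ L % 2 = 1 := by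
    have h1 : 2 ^ L ≤ n := Nat.pow_log_le_self 2 (by omega)
    have h2 : n < 2 ^ (L + 1) := Nat.lt_pow_succ_log_self one_lt_two n
    rw [pow_succ] at h2
    have hdiv : n / 2 ^ L = 1 := Nat.div_eq_of_lt_le (by omega) (by omega)
    rw [hdiv]
  have hO : (Nat.digits 2 n).count 1
      = ((Finset.range L).filter (fun k => n / 2 ^ k % 2 = 1)).card + 1 := by
    rw [count_one n (by omega), ← hLdef, Finset.range_add_one, Finset.filter_insert,
      if_pos htop, Finset.card_insert_of_notMem (by simp)]
  have hlen : (Nat.digits 2 n).length = L + 1 := Nat.digits_len 2 n one_lt_two (by omega)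
  rw [← hT, ← hLdef] at hG hLc
  rw [hSn, hSn1, split1, split2, f, hlen, hO, hG, hLc]
  push_cast
  omega

theorem stmt_3 (n : ℕ) : D n = ((S n).card : ℤ) := by
  induction n with
  | zero => simp [D, S]
  | succ n ih =>
    have hs := step (n + 1) (by omega)
    simp only [Nat.add_sub_cancel] at hs
    have hD : D (n + 1) = D n + f (n + 1) := by
      rw [D, D, ← Finset.sum_Icc_succ_top (by omega : 1 ≤ n + 1)]
    rw [hD, ih, hs]
end

section
/- For positive integers k and n with n < 2^k, |S_{n + 2^k}| = |S_n| + (n+1)·(⌊log₂ n⌋ - k + 2) + 2^k - 2^(⌊log₂ n⌋ + 1). -/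
lemma sum_two_pow_Ico (a b : ℕ) (h : a ≤ b) :
    ∑ ℓ ∈ Finset.Ico a b, (2 : ℤ) ^ ℓ = 2 ^ b - 2 ^ a := by
  induction b with
  | zero =>
    have : a = 0 := by omega
    subst this; simp
  | succ b ih =>
    rcases Nat.lt_or_ge a (b + 1) with h' | h'
    · have hab : a ≤ b := by omega
      rw [Finset.sum_Ico_succ_top hab, ih hab]; ring
    · have : a = b + 1 := by omega
      subst this; simp

/-- mod computation for the middle range -/
lemma mod_mid (n k ℓ m : ℕ) (h1 : n < m) (h2 : m < 2 ^ (ℓ + 1)) (h3 : ℓ + 1 ≤ k) :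
    (n + 2 ^ k - m) % 2 ^ (ℓ + 1) = n + 2 ^ (ℓ + 1) - m := by
  obtain ⟨c, hc⟩ : ∃ c, 2 ^ k = 2 ^ (ℓ + 1) * c + 2 ^ (ℓ + 1) := by
    refine ⟨2 ^ (k - (ℓ + 1)) - 1, ?_⟩
    have h4 : 1 ≤ (2 : ℕ) ^ (k - (ℓ + 1)) := Nat.one_le_two_pow
    rw [Nat.mul_sub, Nat.mul_one, ← pow_add]
    have : ℓ + 1 + (k - (ℓ + 1)) = k := by omega
    rw [this]
    have h5 : 2 ^ (ℓ + 1) ≤ 2 ^ k := Nat.pow_le_pow_right (by norm_num) h3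
    omega
  have hrw : n + 2 ^ k - m = (n + 2 ^ (ℓ + 1) - m) + 2 ^ (ℓ + 1) * c := by omega
  rw [hrw, Nat.add_mul_mod_self_left, Nat.mod_eq_of_lt (by omega)]

/-- the defining condition is stable under adding 2^k when m ≤ n < 2^k -/
lemma mod_low (n k m : ℕ) (hm1 : 1 ≤ m) (hmn : m ≤ n) (hnk : n < 2 ^ k) :
    (n + 2 ^ k - m) % 2 ^ (Nat.log 2 m + 1) = (n - m) % 2 ^ (Nat.log 2 m + 1) := by
  set ℓ := Nat.log 2 m with hℓ
  have h1 : 2 ^ ℓ ≤ m := Nat.pow_log_le_self 2 (by omega)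
  have hℓk : ℓ + 1 ≤ k := by
    by_contra hc
    have : 2 ^ k ≤ 2 ^ ℓ := Nat.pow_le_pow_right (by norm_num) (by omega)
    omega
  have hrw : n + 2 ^ k - m = (n - m) + 2 ^ (ℓ + 1) * 2 ^ (k - (ℓ + 1)) := by
    rw [← pow_add]
    have : ℓ + 1 + (k - (ℓ + 1)) = k := by omega
    rw [this]; omega
  rw [hrw, Nat.add_mul_mod_self_left]

theorem stmt_4 (n k : ℕ) (hn : 0 < n) (hk : 0 < k) (h : n < 2 ^ k) :
    ((S (n + 2 ^ k)).card : ℤ) =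
      (S n).card + (n + 1) * ((Nat.log 2 n : ℤ) - k + 2) + 2 ^ k - 2 ^ (Nat.log 2 n + 1) := by
  set L := Nat.log 2 n with hL
  have hLn : 2 ^ L ≤ n := Nat.pow_log_le_self 2 hn.ne'
  have hnL : n < 2 ^ (L + 1) := Nat.lt_pow_succ_log_self (by norm_num) n
  have hLk : L + 1 ≤ k := by
    by_contra hc
    have : 2 ^ k ≤ 2 ^ L := Nat.pow_le_pow_right (by norm_num) (by omega)
    omega
  set B : Finset ℕ := (Finset.Ico (L + 1) k).biUnion
      (fun ℓ => Finset.Ioo (n + 2 ^ ℓ) (2 ^ (ℓ + 1))) with hB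
  set C : Finset ℕ := Finset.Icc (2 ^ k) (n + 2 ^ k) with hC
  -- the splitting
  have hsplit : S (n + 2 ^ k) = S n ∪ B ∪ C := by
    ext m
    simp only [S, hB, hC, Finset.mem_filter, Finset.mem_Icc, Finset.mem_union,
      Finset.mem_biUnion, Finset.mem_Ico, Finset.mem_Ioo]
    constructor
    · rintro ⟨⟨hm1, hm2⟩, hcond⟩
      rcases Nat.lt_or_ge m (2 ^ k) with hmk | hmk
      · rcases le_or_gt m n with hmn | hmn
        · left; left
          rw [mod_low n k m hm1 hmn h] at hcond
          exact ⟨⟨hm1, hmn⟩, hcond⟩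
        · left; right
          set ℓ := Nat.log 2 m with hℓ
          have h1 : 2 ^ ℓ ≤ m := Nat.pow_log_le_self 2 (by omega)
          have h2 : m < 2 ^ (ℓ + 1) := Nat.lt_pow_succ_log_self (by norm_num) m
          have hℓk : ℓ + 1 ≤ k := by
            by_contra hc
            have : 2 ^ k ≤ 2 ^ ℓ := Nat.pow_le_pow_right (by norm_num) (by omega)
            omega
          rw [mod_mid n k ℓ m hmn h2 hℓk] at hcond
          have hp : 2 ^ (ℓ + 1) = 2 * 2 ^ ℓ := by ring
          have hmgt : n + 2 ^ ℓ < m := by omega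
          refine ⟨ℓ, ⟨?_, by omega⟩, hmgt, h2⟩
          by_contra hc
          have : 2 ^ ℓ ≤ 2 ^ L := Nat.pow_le_pow_right (by norm_num) (by omega)
          omega
      · right; exact ⟨hmk, hm2⟩
    · rintro ((⟨⟨hm1, hmn⟩, hcond⟩ | ⟨ℓ, ⟨hℓ1, hℓ2⟩, hm1, hm2⟩) | ⟨hm1, hm2⟩)
      · refine ⟨⟨hm1, by omega⟩, ?_⟩
        rw [mod_low n k m hm1 hmn h]
        exact hcond
      · have hℓL : 2 ^ (L + 1) ≤ 2 ^ ℓ := Nat.pow_le_pow_right (by norm_num) hℓ1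
        have h1 : 2 ^ ℓ ≤ m := by omega
        have hlog : Nat.log 2 m = ℓ := Nat.log_eq_of_pow_le_of_lt_pow h1 hm2
        have hℓk : 2 ^ (ℓ + 1) ≤ 2 ^ k := Nat.pow_le_pow_right (by norm_num) (by omega)
        refine ⟨⟨by omega, by omega⟩, ?_⟩
        rw [hlog, mod_mid n k ℓ m (by omega) hm2 (by omega)]
        have hp : 2 ^ (ℓ + 1) = 2 * 2 ^ ℓ := by ring
        omega
      · have hlog : Nat.log 2 m = k :=
          Nat.log_eq_of_pow_le_of_lt_pow hm1 (by
            have hp : 2 ^ (k + 1) = 2 * 2 ^ k := by ring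
            omega)
        refine ⟨⟨by omega, hm2⟩, ?_⟩
        rw [hlog, Nat.mod_eq_of_lt (by
          have hp : 2 ^ (k + 1) = 2 * 2 ^ k := by ring
          omega)]
        omega
  -- disjointness
  have hBsub : ∀ m ∈ B, n < m ∧ m < 2 ^ k := by
    intro m hm
    rw [hB, Finset.mem_biUnion] at hm
    obtain ⟨ℓ, hℓ, hm⟩ := hm
    rw [Finset.mem_Ico] at hℓ
    rw [Finset.mem_Ioo] at hm
    have : 2 ^ (ℓ + 1) ≤ 2 ^ k := Nat.pow_le_pow_right (by norm_num) (by omega)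
    omega
  have hAB : Disjoint (S n) B := by
    rw [Finset.disjoint_left]
    intro m hmA hmB
    have h1 := hBsub m hmB
    have h2 : m ≤ n := by
      have := Finset.mem_filter.mp hmA
      have := Finset.mem_Icc.mp this.1
      omega
    omega
  have hABC : Disjoint (S n ∪ B) C := by
    rw [Finset.disjoint_left]
    intro m hmAB hmC
    rw [hC, Finset.mem_Icc] at hmC
    rcases Finset.mem_union.mp hmAB with hmA | hmB
    · have := Finset.mem_filter.mp hmA
      have := Finset.mem_Icc.mp this.1
      omega
    · have := hBsub m hmB
      omega
  -- cardinalities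
  have hcardC : C.card = n + 1 := by
    rw [hC, Nat.card_Icc]; omega
  have hcardB : (B.card : ℤ) = 2 ^ k - 2 ^ (L + 1) - ((k : ℤ) - (L + 1)) * (n + 1) := by
    rw [hB, Finset.card_biUnion]
    · push_cast
      have hterm : ∀ ℓ ∈ Finset.Ico (L + 1) k,
          ((Finset.Ioo (n + 2 ^ ℓ) (2 ^ (ℓ + 1))).card : ℤ) = 2 ^ ℓ - (n + 1) := by
        intro ℓ hℓ
        rw [Finset.mem_Ico] at hℓ
        have h1 : 2 ^ (L + 1) ≤ 2 ^ ℓ := Nat.pow_le_pow_right (by norm_num) hℓ.1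
        have hp : (2 : ℕ) ^ (ℓ + 1) = 2 * 2 ^ ℓ := by ring
        rw [Nat.card_Ioo]
        have h3 : n + 1 ≤ 2 ^ ℓ := by omega
        have h4 : 2 ^ (ℓ + 1) - (n + 2 ^ ℓ) - 1 = 2 ^ ℓ - (n + 1) := by omega
        rw [h4, Nat.cast_sub h3]
        push_cast
        ring
      rw [Finset.sum_congr rfl hterm, Finset.sum_sub_distrib, sum_two_pow_Ico _ _ hLk,
        Finset.sum_const, Nat.card_Ico, nsmul_eq_mul]
      push_cast [Nat.cast_sub hLk]
      ring
    · intro i hi j hj hij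
      rw [Finset.mem_coe, Finset.mem_Ico] at hi hj
      rw [Function.onFun, Finset.disjoint_left]
      intro m hmi hmj
      rw [Finset.mem_Ioo] at hmi hmj
      rcases Nat.lt_or_ge i j with hlt | hge
      · have : 2 ^ (i + 1) ≤ 2 ^ j := Nat.pow_le_pow_right (by norm_num) (by omega)
        omega
      · have hji : j < i := by omega
        have : 2 ^ (j + 1) ≤ 2 ^ i := Nat.pow_le_pow_right (by norm_num) (by omega)
        omega
  have hcard : (S (n + 2 ^ k)).card = (S n).card + B.card + C.card := by
    rw [hsplit, Finset.card_union_of_disjoint hABC, Finset.card_union_of_disjoint hAB]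
  rw [hcard]
  push_cast [hcardC]
  rw [hcardB]
  push_cast [Nat.cast_sub hLk]
  ring
end

section
/- For every real ξ ∈ [0,1] and every positive integer m, τ((ξ+1)·2^(−m)) = 2^(−m)·(m·(ξ+1) − 2ξ + τ(ξ)). -/
/-- Distance from y to the nearest integer. -/
noncomputable def s (y : ℝ) : ℝ := |y - round y|

/-- The Takagi function. -/
noncomputable def τ (x : ℝ) : ℝ := ∑' n : ℕ, s (2 ^ n * x) / 2 ^ n

lemma s_nonneg (y : ℝ) : 0 ≤ s y := abs_nonneg _

lemma s_le_half (y : ℝ) : s y ≤ 1 / 2 := abs_sub_round y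

lemma s_eq_self {y : ℝ} (h0 : 0 ≤ y) (h : y ≤ 1 / 2) : s y = y := by
  rcases lt_or_eq_of_le h with h' | h'
  · have : round y = 0 := by
      rw [round_eq]
      apply Int.floor_eq_iff.mpr
      constructor <;> push_cast <;> linarith
    rw [s, this]
    push_cast
    rw [sub_zero, abs_of_nonneg h0]
  · have : round y = 1 := by
      rw [round_eq, h']
      norm_num
    rw [s, this, h']
    norm_num

lemma s_one_sub {y : ℝ} (h : 1 / 2 ≤ y) (h1 : y ≤ 1) : s y = 1 - y := by
  have : round y = 1 := by
    rw [round_eq]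
    apply Int.floor_eq_iff.mpr
    constructor <;> push_cast <;> linarith
  rw [s, this]
  push_cast
  rw [abs_of_nonpos (by linarith)]
  ring

lemma s_add_int (y : ℝ) (k : ℤ) : s (y + k) = s y := by
  rw [s, round_add_intCast]
  push_cast
  rw [show y + k - (round y + k) = y - round y by ring, s]

lemma takagi_summable (x : ℝ) : Summable (fun n : ℕ => s (2 ^ n * x) / 2 ^ n) := by
  apply Summable.of_nonneg_of_le
    (fun n => div_nonneg (s_nonneg _) (by positivity)) (fun n => ?_) summable_geometric_two
  rw [div_pow, one_pow]
  exact div_le_div_of_nonneg_right ((s_le_half _).trans (by norm_num)) (by positivity) |>.trans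
    (le_refl _) |>.trans (le_refl _)

theorem stmt_6 (ξ : ℝ) (hξ : ξ ∈ Set.Icc (0 : ℝ) 1) (m : ℕ) (hm : 0 < m) :
    τ ((ξ + 1) * 2 ^ (-(m : ℤ))) =
      2 ^ (-(m : ℤ)) * ((m : ℝ) * (ξ + 1) - 2 * ξ + τ ξ) := by
  obtain ⟨hξ0, hξ1⟩ := hξ
  obtain ⟨k, rfl⟩ : ∃ k, m = k + 1 := ⟨m - 1, (Nat.succ_pred_eq_of_pos hm).symm⟩
  have h2m : (2:ℝ) ^ (-((k+1 : ℕ):ℤ)) = ((2:ℝ) ^ (k+1))⁻¹ := by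
    rw [zpow_neg, zpow_natCast]
  rw [h2m, τ, ← Summable.sum_add_tsum_nat_add (k+1) (takagi_summable _)]
  -- tail
  have htail : (∑' n : ℕ, s (2 ^ (n + (k+1)) * ((ξ + 1) * ((2:ℝ) ^ (k+1))⁻¹)) / 2 ^ (n + (k+1)))
      = τ ξ * ((2:ℝ) ^ (k+1))⁻¹ := by
    rw [τ, ← tsum_mul_right]
    congr 1
    ext n
    have harg : (2:ℝ) ^ (n + (k+1)) * ((ξ + 1) * ((2:ℝ) ^ (k+1))⁻¹) = 2 ^ n * ξ + ((2^n : ℤ) : ℝ) := by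
      push_cast
      rw [pow_add]
      field_simp
    rw [harg, s_add_int, pow_add]
    field_simp
  rw [htail]
  -- finite sum
  rw [Finset.sum_range_succ]
  have hmain : ∀ n ∈ Finset.range k,
      s (2 ^ n * ((ξ + 1) * ((2:ℝ) ^ (k+1))⁻¹)) / 2 ^ n = (ξ + 1) * ((2:ℝ) ^ (k+1))⁻¹ := by
    intro n hn
    rw [Finset.mem_range] at hn
    have hle : (2:ℝ) ^ n * ((ξ + 1) * ((2:ℝ) ^ (k+1))⁻¹) ≤ 1 / 2 := by
      have h1 : (2:ℝ) ^ n * 2 * ((2:ℝ) ^ (k+1))⁻¹ ≤ 1 / 2 := by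
        rw [show (2:ℝ) ^ n * 2 = 2 ^ (n+1) by ring, inv_eq_one_div,
          mul_one_div, div_le_div_iff₀ (by positivity) (by norm_num)]
        calc (2:ℝ) ^ (n+1) * 2 = 2 ^ (n+2) := by ring
          _ ≤ 2 ^ (k+1) := by
              apply pow_le_pow_right₀ (by norm_num); omega
          _ = 1 * 2 ^ (k+1) := by ring
      calc (2:ℝ) ^ n * ((ξ + 1) * ((2:ℝ) ^ (k+1))⁻¹)
          ≤ (2:ℝ) ^ n * (2 * ((2:ℝ) ^ (k+1))⁻¹) := by
            gcongr
            linarith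
        _ = (2:ℝ) ^ n * 2 * ((2:ℝ) ^ (k+1))⁻¹ := by ring
        _ ≤ 1 / 2 := h1
    rw [s_eq_self (by positivity) hle]
    field_simp
  rw [Finset.sum_congr rfl hmain, Finset.sum_const, nsmul_eq_mul]
  have hk : (2:ℝ) ^ k * ((ξ + 1) * ((2:ℝ) ^ (k+1))⁻¹) = (ξ + 1) / 2 := by
    rw [pow_succ]
    field_simp
  rw [hk, s_one_sub (by linarith) (by linarith)]
  have h2 : (2:ℝ) ^ (k+1) ≠ 0 := by positivity
  push_cast
  field_simp
  rw [Finset.card_range]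
  ring
end

section
/- For every real ξ ∈ [0, 1/2], τ(ξ + 1/2) = 1/2 − 2ξ + τ(ξ). -/
theorem stmt_7 (ξ : ℝ) (hξ : ξ ∈ Set.Icc (0 : ℝ) (1 / 2)) :
    τ (ξ + 1 / 2) = 1 / 2 - 2 * ξ + τ ξ := by
  obtain ⟨h0, h1⟩ := hξ
  have hsξ : s ξ = ξ := by
    rcases eq_or_lt_of_le h1 with h | h
    · subst h
      have : round ((1:ℝ)/2) = 1 := by
        rw [round_eq]; norm_num
      rw [s, this]
      norm_num
    · have hr : round ξ = 0 := by
        rw [round_eq, Int.floor_eq_zero_iff]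
        constructor <;> [linarith; simpa using by linarith]
      rw [s, hr]
      simpa using abs_of_nonneg h0
  have hshead : s (ξ + 1 / 2) = 1 / 2 - ξ := by
    have hr : round (ξ + 1 / 2) = 1 := by
      rw [round_eq]
      have : ⌊ξ + 1 / 2 + 1 / 2⌋ = ⌊ξ + 1⌋ := by ring_nf
      rw [this]
      have : ((1:ℤ):ℝ) ≤ ξ + 1 ∧ ξ + 1 < (1:ℤ) + 1 := by
        constructor <;> push_cast <;> linarith
      exact Int.floor_eq_iff.mpr this
    rw [s, hr]
    push_cast
    rw [show ξ + 1/2 - 1 = ξ - 1/2 by ring, abs_of_nonpos (by linarith)]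
    ring
  have key : ∀ x : ℝ, τ x = s x + ∑' n : ℕ, s (2 ^ (n+1) * x) / 2 ^ (n+1) := by
    intro x
    rw [τ, Summable.tsum_eq_zero_add (takagi_summable x)]
    norm_num
  have tail : (∑' n : ℕ, s (2 ^ (n+1) * (ξ + 1/2)) / 2 ^ (n+1))
      = ∑' n : ℕ, s (2 ^ (n+1) * ξ) / 2 ^ (n+1) := by
    apply tsum_congr
    intro n
    congr 1
    have : (2:ℝ) ^ (n+1) * (ξ + 1/2) = 2 ^ (n+1) * ξ + ((2:ℤ) ^ n : ℤ) := by
      push_cast; ring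
    rw [this, s_add_int]
  rw [key, key, tail, hsξ, hshead]
  ring
end

section
/- For every positive integer n, D(n) = n − 2^k · τ((n+1)/2^k − 1), where k = ⌊log₂ n⌋. -/
lemma s_int (n : ℤ) : s n = 0 := by simp [s]

lemma s_lo (m : ℤ) (y : ℝ) (h1 : (m:ℝ) ≤ y) (h2 : y ≤ m + 1/2) : s y = y - m := by
  rcases lt_or_eq_of_le h2 with h2 | h2
  · have : round y = m := by
      rw [round_eq]
      apply Int.floor_eq_iff.mpr
      constructor <;> push_cast <;> linarith
    rw [s, this, abs_of_nonneg (by linarith)]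
  · have : round y = m + 1 := by
      rw [round_eq, h2]
      rw [show (m:ℝ) + 1/2 + 1/2 = ((m+1 : ℤ):ℝ) by push_cast; ring, Int.floor_intCast]
    rw [s, this, h2]
    push_cast
    rw [abs_of_nonpos (by linarith)]
    ring

lemma s_hi (m : ℤ) (y : ℝ) (h1 : (m:ℝ) + 1/2 ≤ y) (h2 : y ≤ m + 1) : s y = m + 1 - y := by
  have : round y = m + 1 := by
    rw [round_eq]
    apply Int.floor_eq_iff.mpr
    constructor <;> push_cast <;> linarith
  rw [s, this]
  push_cast
  rw [abs_of_nonpos (by linarith)]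
  ring

lemma tau_dyadic (j m : ℕ) :
    τ ((m : ℝ) / 2^j) = ∑ i ∈ Finset.range j, s (2^i * ((m:ℝ) / 2^j)) / 2^i := by
  apply tsum_eq_sum
  intro i hi
  rw [Finset.mem_range, not_lt] at hi
  have : (2:ℝ)^i * ((m:ℝ) / 2^j) = ((2^(i-j) * m : ℕ) : ℤ) := by
    push_cast
    rw [pow_sub₀ (2:ℝ) (by norm_num) hi]
    field_simp
  rw [this, s_int, zero_div]

lemma s_mid (d : ℕ) (hd : 1 ≤ d) (m : ℕ) :
    s ((2*m+1 : ℝ)/2^(d+1)) = (s ((m:ℝ)/2^d) + s ((m+1:ℝ)/2^d))/2 := by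
  set p : ℕ := m / 2^(d-1) with hp
  have h2d : (2:ℝ)^d = 2^(d-1) * 2 := by
    rw [← pow_succ]; congr 1; omega
  have hpl : (p * 2^(d-1) : ℕ) ≤ m := Nat.div_mul_le_self m _
  have hpu : m < (p+1) * 2^(d-1) := by
    rw [hp]
    have h2 : m % 2^(d-1) < 2^(d-1) := Nat.mod_lt m (by positivity)
    calc m = 2^(d-1) * (m / 2^(d-1)) + m % 2^(d-1) := (Nat.div_add_mod m (2^(d-1))).symm
    _ < 2^(d-1) * (m / 2^(d-1)) + 2^(d-1) := Nat.add_lt_add_left h2 _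
    _ = (m / 2^(d-1) + 1) * 2^(d-1) := by ring
  have hpos : (0:ℝ) < 2^(d-1) := by positivity
  -- real bounds
  have hl : (p:ℝ)/2 ≤ (m:ℝ)/2^d := by
    rw [h2d, div_le_div_iff₀ (by positivity) (by positivity)]
    calc (p:ℝ) * (2^(d-1)*2) = (p * 2^(d-1) : ℕ) * 2 := by push_cast; ring
    _ ≤ (m:ℝ) * 2 := by
        have : ((p * 2^(d-1) : ℕ) : ℝ) ≤ m := by exact_mod_cast hpl
        linarith
  have hu : ((m:ℝ)+1)/2^d ≤ ((p:ℝ)+1)/2 := by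
    rw [h2d, div_le_div_iff₀ (by positivity) (by positivity)]
    have : (m:ℝ) + 1 ≤ (p+1) * 2^(d-1) := by
      have : (m+1 : ℕ) ≤ (p+1) * 2^(d-1) := hpu
      exact_mod_cast this
    nlinarith
  have hmm : (m:ℝ)/2^d ≤ ((m:ℝ)+1)/2^d := by
    gcongr
    linarith
  have hmid : (2*m+1 : ℝ)/2^(d+1) = ((m:ℝ)/2^d + ((m:ℝ)+1)/2^d)/2 := by
    rw [pow_succ]; field_simp; ring
  rcases Nat.even_or_odd p with ⟨q, hq⟩ | ⟨q, hq⟩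
  · have hq' : (p:ℝ) = 2*q := by rw [hq]; push_cast; ring
    have e1 : s ((m:ℝ)/2^d) = (m:ℝ)/2^d - q := s_lo q _ (by rw [hq'] at hl; push_cast; linarith) (by rw [hq'] at hu; push_cast; linarith)
    have e2 : s (((m:ℝ)+1)/2^d) = ((m:ℝ)+1)/2^d - q := s_lo q _ (by rw [hq'] at hl; push_cast; linarith) (by rw [hq'] at hu; push_cast; linarith)
    have e3 : s ((2*m+1 : ℝ)/2^(d+1)) = (2*m+1:ℝ)/2^(d+1) - q := by
      apply s_lo q _ _ _ <;> rw [hmid] <;> rw [hq'] at hl hu <;> push_cast <;> linarith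
    rw [e1, e2, e3, hmid]; ring
  · have hq' : (p:ℝ) = 2*q+1 := by rw [hq]; push_cast; ring
    have e1 : s ((m:ℝ)/2^d) = (q:ℝ) + 1 - (m:ℝ)/2^d := s_hi q _ (by rw [hq'] at hl; push_cast; linarith) (by rw [hq'] at hu; push_cast; linarith)
    have e2 : s (((m:ℝ)+1)/2^d) = (q:ℝ)+1 - ((m:ℝ)+1)/2^d := s_hi q _ (by rw [hq'] at hl; push_cast; linarith) (by rw [hq'] at hu; push_cast; linarith)
    have e3 : s ((2*m+1 : ℝ)/2^(d+1)) = (q:ℝ)+1 - (2*m+1:ℝ)/2^(d+1) := by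
      apply s_hi q _ _ _ <;> rw [hmid] <;> rw [hq'] at hl hu <;> push_cast <;> linarith
    rw [e1, e2, e3, hmid]; ring
lemma tau_midpoint (j m : ℕ) :
    τ ((2*m+1 : ℝ) / 2^(j+1)) = (τ ((m:ℝ)/2^j) + τ (((m:ℝ)+1)/2^j)) / 2 + 1/2^(j+1) := by
  have h1 : τ ((2*m+1 : ℝ) / 2^(j+1)) = ∑ i ∈ Finset.range (j+1), s (2^i * ((2*m+1:ℝ) / 2^(j+1))) / 2^i := by
    have := tau_dyadic (j+1) (2*m+1)
    push_cast at this
    exact this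
  have h2 := tau_dyadic j m
  have h3 : τ (((m:ℝ)+1)/2^j) = ∑ i ∈ Finset.range j, s (2^i * (((m:ℝ)+1) / 2^j)) / 2^i := by
    have := tau_dyadic j (m+1)
    push_cast at this
    exact this
  rw [h1, h2, h3, Finset.sum_range_succ]
  have hlast : s ((2:ℝ)^j * ((2*m+1:ℝ) / 2^(j+1))) / 2^j = 1/2^(j+1) := by
    have he : (2:ℝ)^j * ((2*m+1:ℝ) / 2^(j+1)) = (m:ℝ) + 1/2 := by
      rw [pow_succ]; field_simp
    rw [he, s_hi m _ (by push_cast; linarith) (by push_cast; linarith)]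
    push_cast
    rw [pow_succ]
    field_simp
    ring
  rw [hlast]
  have hterm : ∀ i ∈ Finset.range j,
      s (2^i * ((2*m+1:ℝ) / 2^(j+1))) / 2^i
        = (s (2^i * ((m:ℝ) / 2^j)) / 2^i + s (2^i * (((m:ℝ)+1) / 2^j)) / 2^i) / 2 := by
    intro i hi
    rw [Finset.mem_range] at hi
    set d := j - i with hd
    have hdj : j = i + d := by omega
    have hd1 : 1 ≤ d := by omega
    have e0 : (2:ℝ)^i * ((2*m+1:ℝ) / 2^(j+1)) = (2*m+1:ℝ)/2^(d+1) := by
      rw [hdj, show i + d + 1 = i + (d+1) by ring, pow_add]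
      field_simp
    have e1 : (2:ℝ)^i * ((m:ℝ) / 2^j) = (m:ℝ)/2^d := by
      rw [hdj, pow_add]; field_simp
    have e2 : (2:ℝ)^i * (((m:ℝ)+1) / 2^j) = ((m:ℝ)+1)/2^d := by
      rw [hdj, pow_add]; field_simp
    rw [e0, e1, e2]
    have := s_mid d hd1 m
    push_cast at this
    rw [this]
    ring
  rw [Finset.sum_congr rfl hterm]
  rw [← Finset.sum_div, ← Finset.sum_add_distrib]
def pc (n : ℕ) : ℕ := (Nat.digits 2 n).count 1

lemma pc_two_mul (t : ℕ) (ht : 0 < t) : pc (2*t) = pc t := by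
  unfold pc
  rw [Nat.digits_def' (by norm_num : 1 < 2) (by omega), Nat.mul_mod_right,
    Nat.mul_div_cancel_left t (by norm_num)]
  simp

lemma pc_two_mul_add_one (t : ℕ) : pc (2*t+1) = pc t + 1 := by
  unfold pc
  rw [Nat.digits_def' (by norm_num : 1 < 2) (by omega)]
  have h1 : (2*t+1) % 2 = 1 := by omega
  have h2 : (2*t+1) / 2 = t := by omega
  rw [h1, h2]
  simp

lemma pc_pow_add : ∀ k, ∀ r < 2^k, pc (2^k + r) = pc r + 1 := by
  intro k
  induction k with
  | zero =>
    intro r hr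
    interval_cases r
    simp [pc]
  | succ k ih =>
    intro r hr
    rcases Nat.even_or_odd r with ⟨u, hu⟩ | ⟨u, hu⟩
    · have hu2 : r = 2*u := by omega
      have h : 2^(k+1) + r = 2*(2^k + u) := by rw [hu2]; ring
      rcases Nat.eq_zero_or_pos u with h0 | h0
      · subst h0
        rw [h, pc_two_mul _ (by positivity), ih 0 (by positivity)]
        simp_all
      · rw [h, pc_two_mul _ (by positivity), ih u (by omega), hu2,
          pc_two_mul u h0]
    · have h : 2^(k+1) + r = 2*(2^k + u) + 1 := by omega
      rw [h, pc_two_mul_add_one, ih u (by omega), hu, pc_two_mul_add_one]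

lemma tau_slope : ∀ j : ℕ, ∀ m : ℕ, m < 2^j →
    τ (((m:ℝ)+1)/2^j) - τ ((m:ℝ)/2^j) = ((j:ℝ) - 2 * pc m)/2^j := by
  intro j
  induction j with
  | zero =>
    intro m hm
    interval_cases m
    have h0 : τ ((0:ℝ)/2^0) = 0 := by
      have := tau_dyadic 0 0; simpa using this
    have h1 : τ (((0:ℝ)+1)/2^0) = 0 := by
      have := tau_dyadic 0 1; simpa using this
    push_cast
    rw [h0, h1]
    simp [pc]
  | succ j ih =>
    intro m hm
    rcases Nat.even_or_odd m with ⟨t, ht⟩ | ⟨t, ht⟩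
    · have ht2 : m = 2*t := by omega
      have hlt : t < 2^j := by
        rw [ht2] at hm; rw [pow_succ] at hm; omega
      have hmid := tau_midpoint j t
      have hL : ((m:ℝ))/2^(j+1) = (t:ℝ)/2^j := by
        rw [ht2]; push_cast; rw [pow_succ]; field_simp
      have hM : ((m:ℝ)+1)/2^(j+1) = (2*(t:ℝ)+1)/2^(j+1) := by
        rw [ht2]; push_cast; ring_nf
      have hpc : pc m = pc t := by
        rcases Nat.eq_zero_or_pos t with h0 | h0
        · subst h0; simp at ht2; rw [ht2]
        · rw [ht2, pc_two_mul t h0]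
      rw [hL, hM, hmid, hpc]
      rw [sub_eq_iff_eq_add] at *
      have := ih t hlt
      rw [sub_eq_iff_eq_add] at this
      rw [this]
      push_cast
      rw [pow_succ]
      field_simp
      ring
    · have ht2 : m = 2*t+1 := by omega
      have hlt : t < 2^j := by
        rw [ht2] at hm; rw [pow_succ] at hm; omega
      have hmid := tau_midpoint j t
      have hL : ((m:ℝ))/2^(j+1) = (2*(t:ℝ)+1)/2^(j+1) := by
        rw [ht2]; push_cast; ring_nf
      have hM : ((m:ℝ)+1)/2^(j+1) = ((t:ℝ)+1)/2^j := by
        rw [ht2]; push_cast; rw [pow_succ]; field_simp; ring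
      have hpc : pc m = pc t + 1 := by rw [ht2, pc_two_mul_add_one]
      rw [hL, hM, hmid, hpc]
      have := ih t hlt
      rw [sub_eq_iff_eq_add] at this ⊢
      rw [this]
      push_cast
      rw [pow_succ]
      field_simp
      ring


lemma f_two_mul (t : ℕ) (ht : 0 < t) : f (2*t) = f t - 1 := by
  unfold f
  rw [Nat.digits_def' (by norm_num : 1 < 2) (by omega), Nat.mul_mod_right,
    Nat.mul_div_cancel_left t (by norm_num)]
  simp
  push_cast
  ring

lemma f_two_mul_add_one (t : ℕ) : f (2*t+1) = f t + 1 := by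
  unfold f
  rw [Nat.digits_def' (by norm_num : 1 < 2) (by omega)]
  have h1 : (2*t+1) % 2 = 1 := by omega
  have h2 : (2*t+1) / 2 = t := by omega
  rw [h1, h2]
  simp
  push_cast
  ring

lemma D_succ (n : ℕ) : D (n+1) = D n + f (n+1) := by
  unfold D
  rw [Finset.sum_Icc_succ_top (by omega)]

lemma D_rec : ∀ t : ℕ, D (2*t) = 2 * D t - f t ∧ D (2*t+1) = 2 * D t + 1 := by
  intro t
  induction t with
  | zero =>
    constructor
    · simp [D, f]
    · simp only [Nat.mul_zero, Nat.zero_add]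
      show D 1 = 2 * D 0 + 1
      simp [D]
      norm_num [f]
  | succ t ih =>
    have h1 : 2*(t+1) = (2*t+1) + 1 := by ring
    have h2 : 2*(t+1)+1 = (2*(t+1)) + 1 := by ring
    have e1 : D (2*(t+1)) = 2 * D (t+1) - f (t+1) := by
      rw [h1, D_succ, ih.2, show 2*t+1+1 = 2*(t+1) by ring, f_two_mul (t+1) (by omega),
        D_succ]
      ring
    refine ⟨e1, ?_⟩
    rw [h2, D_succ, e1, f_two_mul_add_one]
    ring

lemma f_pc (t : ℕ) (ht : 0 < t) : f t = 2 * (pc t : ℤ) - (Nat.log 2 t + 1 : ℤ) := by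
  unfold f pc
  rw [Nat.digits_len 2 t (by norm_num) (by omega)]
  push_cast
  ring
lemma log_two_mul' (t : ℕ) (ht : 0 < t) : Nat.log 2 (2*t) = Nat.log 2 t + 1 := by
  have h1 : 2^(Nat.log 2 t) ≤ t := Nat.pow_log_le_self 2 (by omega)
  have h2 : t < 2^(Nat.log 2 t + 1) := Nat.lt_pow_succ_log_self (by norm_num) t
  apply Nat.log_eq_of_pow_le_of_lt_pow
  · rw [pow_succ]; omega
  · rw [pow_succ, pow_succ]; omega

lemma log_two_mul_add_one' (t : ℕ) (ht : 0 < t) : Nat.log 2 (2*t+1) = Nat.log 2 t + 1 := by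
  have h1 : 2^(Nat.log 2 t) ≤ t := Nat.pow_log_le_self 2 (by omega)
  have h2 : t < 2^(Nat.log 2 t + 1) := Nat.lt_pow_succ_log_self (by norm_num) t
  apply Nat.log_eq_of_pow_le_of_lt_pow
  · rw [pow_succ]; omega
  · rw [pow_succ, pow_succ]; omega

lemma key (t : ℕ) (ht : 0 < t) :
    τ ((2*(t:ℝ)+1)/2^(Nat.log 2 t + 1) - 1)
      = τ (((t:ℝ)+1)/2^(Nat.log 2 t) - 1) + (f t : ℝ)/2^(Nat.log 2 t + 1) := by
  set k := Nat.log 2 t with hk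
  have h1 : 2^k ≤ t := Nat.pow_log_le_self 2 (by omega)
  have h2 : t < 2^(k+1) := Nat.lt_pow_succ_log_self (by norm_num) t
  set r := t - 2^k with hr
  have hteq : t = 2^k + r := by omega
  have hrlt : r < 2^k := by rw [pow_succ] at h2; omega
  have hpos : (0:ℝ) < 2^k := by positivity
  have harg1 : (2*(t:ℝ)+1)/2^(k+1) - 1 = ((2*r+1 : ℕ):ℝ)/2^(k+1) := by
    have : (t:ℝ) = 2^k + r := by rw [hteq]; push_cast; ring
    rw [this]
    push_cast
    rw [pow_succ]
    field_simp
    ring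
  have harg2 : ((t:ℝ)+1)/2^k - 1 = (((2*r+1:ℕ):ℝ)+1)/2^(k+1) := by
    have : (t:ℝ) = 2^k + r := by rw [hteq]; push_cast; ring
    rw [this]
    push_cast
    rw [pow_succ]
    field_simp
    ring
  have hlt : 2*r+1 < 2^(k+1) := by rw [pow_succ]; omega
  have hslope := tau_slope (k+1) (2*r+1) hlt
  have hpc : pc (2*r+1) = pc t := by
    rw [pc_two_mul_add_one, hteq, pc_pow_add k r hrlt]
  have hf : (f t : ℝ) = 2 * (pc t : ℝ) - ((k:ℝ) + 1) := by
    have := f_pc t ht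
    rw [← hk] at this
    rw [this]
    push_cast
    ring
  rw [harg1, harg2]
  rw [hpc] at hslope
  have hp2 : (0:ℝ) < 2^(k+1) := by positivity
  rw [hf]
  push_cast at hslope ⊢
  rw [sub_eq_iff_eq_add] at hslope
  rw [hslope]
  push_cast
  field_simp
  ring

theorem stmt_8 (n : ℕ) (hn : 0 < n) :
    (D n : ℝ) = n - 2 ^ Nat.log 2 n * τ ((n + 1) / 2 ^ Nat.log 2 n - 1) := by
  induction n using Nat.strong_induction_on with
  | _ n ih =>
  rcases Nat.lt_or_ge n 2 with hn2 | hn2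
  · have : n = 1 := by omega
    subst this
    have hD1 : D 1 = 1 := by simp [D]; norm_num [f]
    have hlog : Nat.log 2 1 = 0 := Nat.log_one_right 2
    have htau1 : τ 1 = 0 := by
      have := tau_dyadic 0 1
      simpa using this
    rw [hD1, hlog]
    norm_num [htau1]
  · rcases Nat.even_or_odd n with ⟨t, htn⟩ | ⟨t, htn⟩
    · have htn2 : n = 2*t := by omega
      have ht : 0 < t := by omega
      have iht := ih t (by omega) ht
      have hlog : Nat.log 2 n = Nat.log 2 t + 1 := by rw [htn2]; exact log_two_mul' t ht
      set k := Nat.log 2 t with hk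
      have hDn : (D n : ℝ) = 2 * (D t : ℝ) - (f t : ℝ) := by
        rw [htn2, (D_rec t).1]; push_cast; ring
      have harg : ((n:ℝ) + 1)/2^(k+1) - 1 = (2*(t:ℝ)+1)/2^(k+1) - 1 := by
        rw [htn2]; push_cast; ring_nf
      rw [hlog, hDn, harg, key t ht, ← hk, iht]
      have hp2 : (0:ℝ) < 2^(k+1) := by positivity
      have hn' : (n:ℝ) = 2*t := by rw [htn2]; push_cast; ring
      rw [hn']
      rw [pow_succ]
      field_simp
      ring
    · have htn2 : n = 2*t+1 := by omega
      have ht : 0 < t := by omega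
      have iht := ih t (by omega) ht
      have hlog : Nat.log 2 n = Nat.log 2 t + 1 := by
        rw [htn2]; exact log_two_mul_add_one' t ht
      set k := Nat.log 2 t with hk
      have hDn : (D n : ℝ) = 2 * (D t : ℝ) + 1 := by
        rw [htn2, (D_rec t).2]; push_cast; ring
      have harg : ((n:ℝ) + 1)/2^(k+1) - 1 = ((t:ℝ)+1)/2^k - 1 := by
        rw [htn2]
        push_cast
        rw [pow_succ]
        have : (0:ℝ) < 2^k := by positivity
        field_simp
        ring
      rw [hlog, hDn, harg, iht]
      have hn' : (n:ℝ) = 2*t+1 := by rw [htn2]; push_cast; ring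
      rw [hn', pow_succ]
      ring
end
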